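/- If ω₁, ω₂, ω₃, ω₄ are unit vectors in ℝ^d satisfying ω₁ + ω₂ + ω₃ + ω₄ = 0, then |ω₁ + ω₂|·|ω₃ + ω₄| + |ω₁ + ω₃|·|ω₂ + ω₄| + |ω₁ + ω₄|·|ω₂ + ω₃| = 4. -/

import Mathlib

theorem foschi_magical_identity {d : ℕ}
    (ω₁ ω₂ ω₃ ω₄ : EuclideanSpace ℝ (Fin d))
    (h₁ : ‖ω₁‖ = 1) (h₂ : ‖ω₂‖ = 1) (h₃ : ‖ω₃‖ = 1) (h₄ : ‖ω₄‖ = 1)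
    (hsum : ω₁ + ω₂ + ω₃ + ω₄ = 0) :
    ‖ω₁ + ω₂‖ * ‖ω₃ + ω₄‖ + ‖ω₁ + ω₃‖ * ‖ω₂ + ω₄‖ + ‖ω₁ + ω₄‖ * ‖ω₂ + ω₃‖ = 4 := by
  have e1 : ω₃ + ω₄ = -(ω₁ + ω₂) := by
    have := hsum; abel_nf at this ⊢; linear_combination (norm := abel) this
  have e2 : ω₂ + ω₄ = -(ω₁ + ω₃) := by
    linear_combination (norm := abel) hsum
  have e3 : ω₂ + ω₃ = -(ω₁ + ω₄) := by
    linear_combination (norm := abel) hsum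
  have e4 : ω₂ + ω₃ + ω₄ = -ω₁ := by
    linear_combination (norm := abel) hsum
  rw [e1, e2, e3, norm_neg, norm_neg, norm_neg]
  have key : ∀ v : EuclideanSpace ℝ (Fin d), ‖v‖ * ‖v‖ = ‖v‖ ^ 2 := fun v => (sq (‖v‖)).symm
  rw [key, key, key, norm_add_sq_real, norm_add_sq_real, norm_add_sq_real, h₁, h₂, h₃, h₄]
  have hi : inner ℝ ω₁ ω₂ + inner ℝ ω₁ ω₃ + inner ℝ ω₁ ω₄ = (-1 : ℝ) := by
    have : inner ℝ ω₁ (ω₂ + ω₃ + ω₄) = (inner ℝ ω₁ (-ω₁) : ℝ) := by rw [e4]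
    rw [inner_add_right, inner_add_right, inner_neg_right, real_inner_self_eq_norm_sq, h₁] at this
    linarith
  linarith
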